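/- (Position PEBO, Proposition 3, transient-free form.) Let α > 0, γ > 0, let Ω, v : ℝ → EuclideanSpace ℝ (Fin 3) be continuous, and let z : ℝ → EuclideanSpace ℝ (Fin 3) be differentiable with z(t) ≠ 0 and z'(t) = −Ω(t) ×₃ z(t) − v(t) for all t ≥ 0. Set y(t) := ‖z(t)‖⁻¹ • z(t). Suppose ξ : ℝ → ℝ is differentiable with ξ'(t) = −⟪y(t), v(t)⟫, and x̄, p₂, q : ℝ → EuclideanSpace ℝ (Fin 3) are differentiable and satisfy for all t ≥ 0: x̄'(t) = −α x̄(t) + α² • y(t) with x̄(0) = α • y(0); p₂'(t) = −α p₂(t) + α • (Ω(t) ×₃ y(t)) with p₂(0) = 0; and, with φ(t) := α • y(t) − x̄(t) + p₂(t), q'(t) = −α q(t) + ⟪y(t), v(t)⟫ • φ(t) + α • (v(t) − ⟪y(t), v(t)⟫ • y(t)) with q(0) = 0. Suppose further that ζ, ω, θ̂ : ℝ → ℝ are differentiable and satisfy for all t ≥ 0: ζ'(t) = ⟪φ(t), −q(t) − ξ(t) • φ(t)⟫ − ‖φ(t)‖² ζ(t); ω'(t) = −‖φ(t)‖² ω(t)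 with ω(0) = 1; and θ̂'(t) = γ((ζ(t) − ω(t) ζ(0)) − (1 − ω(t)) θ̂(t)). If there exists t⋆ > 0 with φ(t⋆) ≠ 0, then there exist M > 0 and λ > 0 such that ‖(ξ(t) + θ̂(t)) • y(t) − z(t)‖ ≤ M exp(−λ t) for all t ≥ 0. -/

import Mathlib

open scoped RealInnerProductSpace
open Set
set_option maxHeartbeats 1000000

/-- Cross product on `EuclideanSpace ℝ (Fin 3)`, transported from Mathlib's
`crossProduct` on `Fin 3 → ℝ`. -/
noncomputable def cross3 (a b : EuclideanSpace ℝ (Fin 3)) : EuclideanSpace ℝ (Fin 3) :=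
  (WithLp.equiv 2 (Fin 3 → ℝ)).symm
    (crossProduct ((WithLp.equiv 2 (Fin 3 → ℝ)) a) ((WithLp.equiv 2 (Fin 3 → ℝ)) b))

lemma inner_cross3_self (a b : EuclideanSpace ℝ (Fin 3)) : ⟪b, cross3 a b⟫ = 0 := by
  rw [EuclideanSpace.inner_eq_star_dotProduct]
  simp [cross3, dotProduct, crossProduct, Fin.sum_univ_three, Matrix.vecHead, Matrix.vecTail]
  ring

lemma cross3_smul (a b : EuclideanSpace ℝ (Fin 3)) (c : ℝ) :
    cross3 a (c • b) = c • cross3 a b := by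
  unfold cross3
  simp only [WithLp.equiv_apply, WithLp.equiv_symm_apply, WithLp.ofLp_smul, map_smul, WithLp.toLp_smul]

lemma aux_antitoneOn {D : Set ℝ} (hD : Convex ℝ D) {f d : ℝ → ℝ}
    (hc : ContinuousOn f D) (hd : ∀ t ∈ interior D, HasDerivAt f (d t) t)
    (h0 : ∀ t ∈ interior D, d t ≤ 0) : AntitoneOn f D :=
  antitoneOn_of_deriv_nonpos hD hc
    (fun t ht => (hd t ht).differentiableAt.differentiableWithinAt)
    (fun t ht => by rw [(hd t ht).deriv]; exact h0 t ht)

lemma aux_monotoneOn {D : Set ℝ} (hD : Convex ℝ D) {f d : ℝ → ℝ}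
    (hc : ContinuousOn f D) (hd : ∀ t ∈ interior D, HasDerivAt f (d t) t)
    (h0 : ∀ t ∈ interior D, 0 ≤ d t) : MonotoneOn f D :=
  monotoneOn_of_deriv_nonneg hD hc
    (fun t ht => (hd t ht).differentiableAt.differentiableWithinAt)
    (fun t ht => by rw [(hd t ht).deriv]; exact h0 t ht)

lemma aux_strictAntiOn {D : Set ℝ} (hD : Convex ℝ D) {f d : ℝ → ℝ}
    (hc : ContinuousOn f D) (hd : ∀ t ∈ interior D, HasDerivAt f (d t) t)
    (h0 : ∀ t ∈ interior D, d t < 0) : StrictAntiOn f D :=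
  strictAntiOn_of_deriv_neg hD hc
    (fun t ht => by rw [(hd t ht).deriv]; exact h0 t ht)

lemma aux_vanish {f d : ℝ → ℝ} (hc : ContinuousOn f (Set.Ici 0))
    (hd : ∀ t ∈ Set.Ioi (0:ℝ), HasDerivAt f (d t) t)
    (h0 : ∀ t ∈ Set.Ioi (0:ℝ), d t ≤ 0)
    (hf0 : f 0 = 0) (hnn : ∀ t ≥ (0:ℝ), 0 ≤ f t) : ∀ t ≥ (0:ℝ), f t = 0 := by
  have ha : AntitoneOn f (Set.Ici 0) :=
    aux_antitoneOn (convex_Ici 0) hc (by rw [interior_Ici]; exact hd)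
      (by rw [interior_Ici]; exact h0)
  exact fun t ht => le_antisymm
    (by simpa [hf0] using ha (self_mem_Ici) ht ht) (hnn t ht)

/-- Position PEBO (Proposition 3, transient-free form): under interval
excitation of the regressor `φ`, the estimate `ẑ = (ξ + θ̂) • y` converges to
`z` globally exponentially. -/
theorem stmt11 (α γ : ℝ) (hα : 0 < α) (hγ : 0 < γ)
    (Ω v : ℝ → EuclideanSpace ℝ (Fin 3)) (hΩ : Continuous Ω) (hv : Continuous v)
    (z : ℝ → EuclideanSpace ℝ (Fin 3))
    (hz : Differentiable ℝ z)
    (hz0 : ∀ t ≥ (0:ℝ), z t ≠ 0)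
    (hzd : ∀ t ≥ (0:ℝ), deriv z t = -cross3 (Ω t) (z t) - v t)
    (y : ℝ → EuclideanSpace ℝ (Fin 3)) (hy : y = fun t => ‖z t‖⁻¹ • z t)
    (ξ : ℝ → ℝ) (hξ : Differentiable ℝ ξ)
    (hξd : ∀ t ≥ (0:ℝ), deriv ξ t = -⟪y t, v t⟫)
    (xb p₂ q : ℝ → EuclideanSpace ℝ (Fin 3))
    (hxb : Differentiable ℝ xb)
    (hxbd : ∀ t ≥ (0:ℝ), deriv xb t = (-α) • xb t + (α ^ 2) • y t)
    (hxb0 : xb 0 = α • y 0)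
    (hp₂ : Differentiable ℝ p₂)
    (hp₂d : ∀ t ≥ (0:ℝ), deriv p₂ t = (-α) • p₂ t + α • cross3 (Ω t) (y t))
    (hp₂0 : p₂ 0 = 0)
    (φ : ℝ → EuclideanSpace ℝ (Fin 3)) (hφ : φ = fun t => α • y t - xb t + p₂ t)
    (hq : Differentiable ℝ q)
    (hqd : ∀ t ≥ (0:ℝ), deriv q t =
      (-α) • q t + ⟪y t, v t⟫ • φ t + α • (v t - ⟪y t, v t⟫ • y t))
    (hq0 : q 0 = 0)
    (ζ ω θhat : ℝ → ℝ)
    (hζ : Differentiable ℝ ζ)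
    (hζd : ∀ t ≥ (0:ℝ), deriv ζ t = ⟪φ t, -q t - ξ t • φ t⟫ - ‖φ t‖ ^ 2 * ζ t)
    (hω : Differentiable ℝ ω)
    (hωd : ∀ t ≥ (0:ℝ), deriv ω t = -‖φ t‖ ^ 2 * ω t)
    (hω0 : ω 0 = 1)
    (hθhat : Differentiable ℝ θhat)
    (hθhatd : ∀ t ≥ (0:ℝ),
      deriv θhat t = γ * ((ζ t - ω t * ζ 0) - (1 - ω t) * θhat t))
    (hIE : ∃ tstar > (0:ℝ), φ tstar ≠ 0) :
    ∃ M > (0:ℝ), ∃ lam > (0:ℝ),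
      ∀ t ≥ (0:ℝ), ‖(ξ t + θhat t) • y t - z t‖ ≤ M * Real.exp (-lam * t) := by
  -- basic nonvanishing facts
  have hnz : ∀ t ≥ (0:ℝ), ‖z t‖ ≠ 0 := fun t ht => norm_ne_zero_iff.mpr (hz0 t ht)
  -- HasDerivAt versions of the given ODEs
  have hzD : ∀ t ∈ Ioi (0:ℝ), HasDerivAt z (-cross3 (Ω t) (z t) - v t) t := by
    intro t ht; rw [← hzd t ht.le]; exact (hz t).hasDerivAt
  have hξD : ∀ t ∈ Ioi (0:ℝ), HasDerivAt ξ (-⟪y t, v t⟫) t := by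
    intro t ht; rw [← hξd t ht.le]; exact (hξ t).hasDerivAt
  have hxbD : ∀ t ∈ Ioi (0:ℝ), HasDerivAt xb ((-α) • xb t + (α ^ 2) • y t) t := by
    intro t ht; rw [← hxbd t ht.le]; exact (hxb t).hasDerivAt
  have hp₂D : ∀ t ∈ Ioi (0:ℝ),
      HasDerivAt p₂ ((-α) • p₂ t + α • cross3 (Ω t) (y t)) t := by
    intro t ht; rw [← hp₂d t ht.le]; exact (hp₂ t).hasDerivAt
  have hqD : ∀ t ∈ Ioi (0:ℝ), HasDerivAt q
      ((-α) • q t + ⟪y t, v t⟫ • φ t + α • (v t - ⟪y t, v t⟫ • y t)) t := by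
    intro t ht; rw [← hqd t ht.le]; exact (hq t).hasDerivAt
  -- derivative of the norm of z
  have hrD : ∀ t ∈ Ioi (0:ℝ), HasDerivAt (fun s => ‖z s‖) (-⟪y t, v t⟫) t := by
    intro t ht
    have hzt : z t ≠ 0 := hz0 t ht.le
    have hin : HasDerivAt (fun s => ⟪z s, z s⟫)
        (⟪z t, -cross3 (Ω t) (z t) - v t⟫ + ⟪-cross3 (Ω t) (z t) - v t, z t⟫) t :=
      HasDerivAt.inner ℝ (hzD t ht) (hzD t ht)
    have hne : ⟪z t, z t⟫ ≠ 0 := by rwa [Ne, inner_self_eq_zero]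
    have hs := (Real.hasDerivAt_sqrt hne).comp t hin
    have hs2 : HasDerivAt (fun s => ‖z s‖)
        (1 / (2 * Real.sqrt ⟪z t, z t⟫) *
          (⟪z t, -cross3 (Ω t) (z t) - v t⟫ + ⟪-cross3 (Ω t) (z t) - v t, z t⟫)) t :=
      hs.congr_of_eventuallyEq (Filter.Eventually.of_forall fun s => by
        show ‖z s‖ = Real.sqrt ⟪z s, z s⟫
        rw [real_inner_self_eq_norm_mul_norm, Real.sqrt_mul_self (norm_nonneg _)])
    convert hs2 using 1
    have h1 : Real.sqrt ⟪z t, z t⟫ = ‖z t‖ := by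
      rw [real_inner_self_eq_norm_mul_norm, Real.sqrt_mul_self (norm_nonneg _)]
    have h2 : ⟪z t, -cross3 (Ω t) (z t) - v t⟫ = -⟪z t, v t⟫ := by
      rw [inner_sub_right, inner_neg_right, inner_cross3_self]; ring
    have h3 : ⟪-cross3 (Ω t) (z t) - v t, z t⟫ = -⟪z t, v t⟫ := by
      rw [real_inner_comm]; exact h2
    have h4 : ⟪y t, v t⟫ = ‖z t‖⁻¹ * ⟪z t, v t⟫ := by
      rw [hy]; exact real_inner_smul_left _ _ _
    rw [h1, h2, h3, h4]
    field_simp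
    ring
  -- derivative of the bearing y
  have hyD : ∀ t ∈ Ioi (0:ℝ), HasDerivAt y
      (‖z t‖⁻¹ • (-cross3 (Ω t) (z t) - v t) + (⟪y t, v t⟫ / ‖z t‖ ^ 2) • z t) t := by
    intro t ht
    have hnzt : ‖z t‖ ≠ 0 := hnz t ht.le
    have hinv : HasDerivAt (fun s => ‖z s‖⁻¹) (⟪y t, v t⟫ / ‖z t‖ ^ 2) t := by
      have := (hrD t ht).inv hnzt
      exact this.congr_deriv (by ring)
    have := HasDerivAt.smul hinv (hzD t ht)
    rw [hy]
    rw [hy] at this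
    exact this
  -- derivative of the regressor φ
  have hφD : ∀ t ∈ Ioi (0:ℝ), HasDerivAt φ
      (α • (‖z t‖⁻¹ • (-cross3 (Ω t) (z t) - v t) + (⟪y t, v t⟫ / ‖z t‖ ^ 2) • z t)
        - ((-α) • xb t + (α ^ 2) • y t)
        + ((-α) • p₂ t + α • cross3 (Ω t) (y t))) t := by
    intro t ht
    have h := (((hyD t ht).const_smul α).sub (hxbD t ht)).add (hp₂D t ht)
    rw [hφ]
    exact h
  -- the function w := q + ‖z‖ • φ satisfies w' = -α w
  set w : ℝ → EuclideanSpace ℝ (Fin 3) := fun s => q s + ‖z s‖ • φ s with hw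
  have hwD : ∀ t ∈ Ioi (0:ℝ), HasDerivAt w ((-α) • w t) t := by
    intro t ht
    have hnzt : ‖z t‖ ≠ 0 := hnz t ht.le
    have h := (hqD t ht).add (HasDerivAt.smul (hrD t ht) (hφD t ht))
    refine h.congr_deriv ?_
    symm
    simp only [hw, hφ, hy]
    rw [cross3_smul]
    match_scalars <;> field_simp <;> ring
  -- continuity of y and φ on [0, ∞)
  have hycont : ContinuousOn y (Ici 0) := by
    rw [hy]
    exact (hz.continuous.norm.continuousOn.inv₀ hnz).smul hz.continuous.continuousOn
  have hφcont : ContinuousOn φ (Ici 0) := by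
    rw [hφ]
    exact ((hycont.const_smul α).sub hxb.continuous.continuousOn).add
      hp₂.continuous.continuousOn
  have hwcont : ContinuousOn w (Ici 0) :=
    hq.continuous.continuousOn.add (hz.continuous.norm.continuousOn.smul hφcont)
  -- φ 0 = 0, hence w 0 = 0
  have hφ0 : φ 0 = 0 := by rw [hφ]; simp [hxb0, hp₂0]
  have hw0 : w 0 = 0 := by simp [hw, hq0, hφ0]
  -- w vanishes identically on [0, ∞)
  have hwzero : ∀ t ≥ (0:ℝ), w t = 0 := by
    have := aux_vanish (f := fun t => ⟪w t, w t⟫)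
      (d := fun t => ⟪w t, (-α) • w t⟫ + ⟪(-α) • w t, w t⟫)
      (hwcont.inner hwcont)
      (fun t ht => HasDerivAt.inner ℝ (hwD t ht) (hwD t ht))
      (fun t ht => by
        show ⟪w t, (-α) • w t⟫ + ⟪(-α) • w t, w t⟫ ≤ 0
        rw [real_inner_smul_right, real_inner_smul_left]
        nlinarith [real_inner_self_nonneg (x := w t)])
      (by simp [hw0])
      (fun t ht => real_inner_self_nonneg)
    intro t ht
    have := this t ht
    rwa [inner_self_eq_zero] at this
  -- ‖z t‖ = ξ t + θ with θ constant
  set θ : ℝ := ‖z 0‖ - ξ 0 with hθdef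
  have hθ : ∀ t ≥ (0:ℝ), ‖z t‖ = ξ t + θ := by
    have hcont : ContinuousOn (fun t => ‖z t‖ - ξ t) (Ici 0) :=
      (hz.continuous.norm.sub hξ.continuous).continuousOn
    have hder : ∀ t ∈ interior (Ici (0:ℝ)),
        HasDerivAt (fun t => ‖z t‖ - ξ t) (-⟪y t, v t⟫ - -⟪y t, v t⟫) t := by
      rw [interior_Ici]; exact fun t ht => (hrD t ht).sub (hξD t ht)
    have h1 : AntitoneOn (fun t => ‖z t‖ - ξ t) (Ici 0) :=
      aux_antitoneOn (convex_Ici 0) hcont hder (fun t _ => by simp)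
    have h2 : MonotoneOn (fun t => ‖z t‖ - ξ t) (Ici 0) :=
      aux_monotoneOn (convex_Ici 0) hcont hder (fun t _ => by simp)
    intro t ht
    have ha := h1 self_mem_Ici ht ht
    have hb := h2 self_mem_Ici ht ht
    simp only at ha hb
    rw [hθdef]; linarith
  -- the regressor identity: -q - ξ φ = θ φ
  have hreg : ∀ t ≥ (0:ℝ), -q t - ξ t • φ t = θ • φ t := by
    intro t ht
    have h := hwzero t ht
    have hq' : q t = -(‖z t‖ • φ t) := by
      rw [hw] at h
      exact eq_neg_of_add_eq_zero_left h
    rw [hq', hθ t ht]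
    match_scalars
    ring
  -- dynamics of u := ζ - θ - (ζ 0 - θ) ω
  set u : ℝ → ℝ := fun t => ζ t - θ - (ζ 0 - θ) * ω t with hu
  have huD : ∀ t ∈ Ioi (0:ℝ), HasDerivAt u (-‖φ t‖ ^ 2 * u t) t := by
    intro t ht
    have h := ((hζ t).hasDerivAt.sub_const θ).sub
      (((hω t).hasDerivAt.const_mul (ζ 0 - θ)))
    rw [hζd t ht.le, hωd t ht.le] at h
    refine h.congr_deriv ?_
    symm
    have hr := hreg t ht.le
    have : ⟪φ t, -q t - ξ t • φ t⟫ = θ * ‖φ t‖ ^ 2 := by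
      rw [hr, real_inner_smul_right, real_inner_self_eq_norm_sq]
    rw [this, hu]
    ring
  have hu0 : u 0 = 0 := by rw [hu]; simp [hω0]
  have huzero : ∀ t ≥ (0:ℝ), u t = 0 := by
    have := aux_vanish (f := fun t => u t * u t)
      (d := fun t => (-‖φ t‖ ^ 2 * u t) * u t + u t * (-‖φ t‖ ^ 2 * u t))
      (((hζ.continuous.sub continuous_const).sub
        (continuous_const.mul hω.continuous)).continuousOn.mul
        ((hζ.continuous.sub continuous_const).sub
        (continuous_const.mul hω.continuous)).continuousOn)
      (fun t ht => (huD t ht).mul (huD t ht))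
      (fun t ht => by
        show (-‖φ t‖ ^ 2 * u t) * u t + u t * (-‖φ t‖ ^ 2 * u t) ≤ 0
        nlinarith [mul_self_nonneg (u t), sq_nonneg ‖φ t‖])
      (by simp [hu0])
      (fun t ht => mul_self_nonneg _)
    intro t ht
    exact mul_self_eq_zero.mp (this t ht)
  have hζω : ∀ t ≥ (0:ℝ), ζ t - ω t * ζ 0 = θ * (1 - ω t) := by
    intro t ht
    have h := huzero t ht
    rw [hu] at h
    linear_combination h
  -- dynamics of the estimation error e := θhat - θ
  set e : ℝ → ℝ := fun t => θhat t - θ with he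
  have heD : ∀ t ∈ Ioi (0:ℝ), HasDerivAt e (-(γ * (1 - ω t)) * e t) t := by
    intro t ht
    have h := (hθhat t).hasDerivAt.sub_const θ
    rw [hθhatd t ht.le] at h
    refine h.congr_deriv ?_
    symm
    simp only [he]
    linear_combination (-γ) * (hζω t ht.le)
  -- ω is positive on [0, ∞)
  have hωpos : ∀ T ≥ (0:ℝ), 0 < ω T := by
    intro T hT
    rcases eq_or_lt_of_le hT with h | h
    · rw [← h, hω0]; norm_num
    obtain ⟨K, hK⟩ : ∃ K, ∀ s ∈ Icc (0:ℝ) T, ‖φ s‖ ^ 2 ≤ K := by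
      obtain ⟨K, hK⟩ := isCompact_Icc.exists_bound_of_continuousOn
        (f := fun s => ‖φ s‖ ^ 2) ((hφcont.mono Icc_subset_Ici_self).norm.pow 2)
      exact ⟨K, fun s hs => (le_abs_self _).trans ((Real.norm_eq_abs _) ▸ hK s hs)⟩
    have hne : ∀ s ∈ Icc (0:ℝ) T, ω s ≠ 0 := by
      have hmono : MonotoneOn (fun s => ω s * ω s * Real.exp (2 * K * s)) (Icc 0 T) := by
        refine aux_monotoneOn (convex_Icc 0 T)
          (d := fun s => ((-‖φ s‖ ^ 2 * ω s) * ω s + ω s * (-‖φ s‖ ^ 2 * ω s)) *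
            Real.exp (2 * K * s) + (ω s * ω s) * (Real.exp (2 * K * s) * (2 * K)))
          ?_ ?_ ?_
        · exact ((hω.continuous.mul hω.continuous).mul
            (Real.continuous_exp.comp (continuous_const.mul continuous_id))).continuousOn
        · rw [interior_Icc]
          intro s hs
          have hωs : HasDerivAt ω (-‖φ s‖ ^ 2 * ω s) s := by
            rw [← hωd s hs.1.le]; exact (hω s).hasDerivAt
          have hlin : HasDerivAt (fun s : ℝ => 2 * K * s) (2 * K) s := by
            simpa using (hasDerivAt_id s).const_mul (2 * K)
          exact (hωs.mul hωs).mul hlin.exp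
        · rw [interior_Icc]
          intro s hs
          have hKs : ‖φ s‖ ^ 2 ≤ K := hK s ⟨hs.1.le, hs.2.le⟩
          have hnn : 0 ≤ (K - ‖φ s‖ ^ 2) * (ω s * ω s) * Real.exp (2 * K * s) :=
            mul_nonneg (mul_nonneg (by linarith) (mul_self_nonneg _)) (Real.exp_pos _).le
          show 0 ≤ ((-‖φ s‖ ^ 2 * ω s) * ω s + ω s * (-‖φ s‖ ^ 2 * ω s)) *
            Real.exp (2 * K * s) + (ω s * ω s) * (Real.exp (2 * K * s) * (2 * K))
          nlinarith [hnn]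
      intro s hs hzero
      have h0s := hmono (left_mem_Icc.mpr (le_of_lt h)) hs hs.1
      simp only [hzero, hω0, Real.exp_zero, mul_zero, zero_mul, one_mul, mul_one] at h0s
      norm_num at h0s
    by_contra hle
    push_neg at hle
    have hmem : (0:ℝ) ∈ Icc (ω T) (ω 0) := ⟨hle, by rw [hω0]; norm_num⟩
    obtain ⟨c, hc, hωc⟩ := intermediate_value_Icc' h.le hω.continuous.continuousOn hmem
    exact hne c hc hωc
    -- ω is antitone and ≤ 1 on [0,∞)
  have hωanti : AntitoneOn ω (Ici 0) := by
    refine aux_antitoneOn (convex_Ici 0) hω.continuous.continuousOn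
      (d := fun t => -‖φ t‖ ^ 2 * ω t) ?_ ?_
    · rw [interior_Ici]; intro t ht
      show HasDerivAt ω (-‖φ t‖ ^ 2 * ω t) t
      rw [← hωd t ht.le]; exact (hω t).hasDerivAt
    · rw [interior_Ici]; intro t ht
      have := hωpos t ht.le
      show -‖φ t‖ ^ 2 * ω t ≤ 0
      nlinarith [sq_nonneg ‖φ t‖]
  have hωle1 : ∀ t ≥ (0:ℝ), ω t ≤ 1 := fun t ht => by
    have := hωanti self_mem_Ici ht ht
    rwa [hω0] at this
  -- strict decrease of ω at the excitation instant
  obtain ⟨ts, hts, hφts⟩ := hIE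
  have hφcontAt : ContinuousAt φ ts := by
    have hnzt : ‖z ts‖ ≠ 0 := hnz ts hts.le
    have hyc : ContinuousAt y ts := by
      rw [hy]
      exact (hz.continuous.norm.continuousAt.inv₀ hnzt).smul hz.continuous.continuousAt
    rw [hφ]
    exact ((hyc.const_smul α).sub hxb.continuous.continuousAt).add
      hp₂.continuous.continuousAt
  obtain ⟨ε, hε, hball⟩ := Metric.eventually_nhds_iff.mp (hφcontAt.eventually_ne hφts)
  set a : ℝ := max (ts - ε / 2) (ts / 2) with ha
  have ha0 : 0 < a := lt_max_of_lt_right (by linarith)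
  have hats : a < ts := max_lt (by linarith) (by linarith)
  have hstrict : StrictAntiOn ω (Icc a ts) := by
    refine aux_strictAntiOn (convex_Icc a ts) hω.continuous.continuousOn
      (d := fun t => -‖φ t‖ ^ 2 * ω t) ?_ ?_
    · rw [interior_Icc]; intro s hs
      show HasDerivAt ω (-‖φ s‖ ^ 2 * ω s) s
      rw [← hωd s (ha0.trans hs.1).le]
      exact (hω s).hasDerivAt
    · rw [interior_Icc]; intro s hs
      have hamax : ts - ε / 2 ≤ a := le_max_left _ _
      have hφs : φ s ≠ 0 := by
        apply hball
        rw [Real.dist_eq, abs_lt]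
        constructor
        · linarith [hs.1, hs.2]
        · linarith [hs.2, hε]
      have h1 : 0 < ‖φ s‖ ^ 2 := pow_pos (norm_pos_iff.mpr hφs) 2
      have h2 : 0 < ω s := hωpos s (ha0.trans hs.1).le
      show -‖φ s‖ ^ 2 * ω s < 0
      nlinarith
  have hωts : ω ts < 1 := by
    have h1 := hstrict (left_mem_Icc.mpr hats.le) (right_mem_Icc.mpr hats.le) hats
    have h2 := hωle1 a ha0.le
    linarith
  set lam : ℝ := γ * (1 - ω ts) with hlamdef
  have hlam : 0 < lam := mul_pos hγ (by linarith)
  -- energy function E = e²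
  set E : ℝ → ℝ := fun t => e t * e t with hE
  have hecont : Continuous e := hθhat.continuous.sub continuous_const
  have hED : ∀ t ∈ Ioi (0:ℝ), HasDerivAt E
      ((-(γ * (1 - ω t)) * e t) * e t + e t * (-(γ * (1 - ω t)) * e t)) t :=
    fun t ht => (heD t ht).mul (heD t ht)
  have hEanti : AntitoneOn E (Ici 0) := by
    refine aux_antitoneOn (convex_Ici 0) (hecont.mul hecont).continuousOn
      (d := fun t => (-(γ * (1 - ω t)) * e t) * e t + e t * (-(γ * (1 - ω t)) * e t))
      ?_ ?_
    · rw [interior_Ici]; exact hED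
    · rw [interior_Ici]; intro t ht
      have h1 := hωle1 t ht.le
      show (-(γ * (1 - ω t)) * e t) * e t + e t * (-(γ * (1 - ω t)) * e t) ≤ 0
      have key : 0 ≤ γ * (1 - ω t) * (e t * e t) :=
        mul_nonneg (mul_nonneg hγ.le (by linarith)) (mul_self_nonneg _)
      nlinarith [key]
  -- weighted energy decays past ts
  have hG : ∀ t ≥ ts, E t * Real.exp (2 * lam * t) ≤ E ts * Real.exp (2 * lam * ts) := by
    have hGanti : AntitoneOn (fun t => E t * Real.exp (2 * lam * t)) (Ici ts) := by
      refine aux_antitoneOn (convex_Ici ts)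
        ((hecont.mul hecont).mul (Real.continuous_exp.comp
          (continuous_const.mul continuous_id))).continuousOn
        (d := fun t => ((-(γ * (1 - ω t)) * e t) * e t + e t * (-(γ * (1 - ω t)) * e t)) *
          Real.exp (2 * lam * t) + (E t) * (Real.exp (2 * lam * t) * (2 * lam))) ?_ ?_
      · rw [interior_Ici]; intro t ht
        have hlin : HasDerivAt (fun s : ℝ => 2 * lam * s) (2 * lam) t := by
          simpa using (hasDerivAt_id t).const_mul (2 * lam)
        exact (hED t (hts.trans ht)).mul hlin.exp
      · rw [interior_Ici]; intro t ht
        have hωt : ω t ≤ ω ts :=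
          hωanti (mem_Ici.mpr hts.le) (mem_Ici.mpr (hts.le.trans ht.le)) ht.le
        show ((-(γ * (1 - ω t)) * e t) * e t + e t * (-(γ * (1 - ω t)) * e t)) *
          Real.exp (2 * lam * t) + (E t) * (Real.exp (2 * lam * t) * (2 * lam)) ≤ 0
        have he2 : (0:ℝ) ≤ e t * e t := mul_self_nonneg _
        have hexp : (0:ℝ) < Real.exp (2 * lam * t) := Real.exp_pos _
        have hlamle : lam ≤ γ * (1 - ω t) := by rw [hlamdef]; nlinarith
        have key : 0 ≤ (e t * e t) * ((γ * (1 - ω t)) - lam) * Real.exp (2 * lam * t) :=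
          mul_nonneg (mul_nonneg he2 (by linarith)) hexp.le
        simp only [hE]
        nlinarith [key]
    intro t ht
    exact hGanti (mem_Ici.mpr le_rfl) (mem_Ici.mpr ht) ht
  -- final exponential bound
  set M : ℝ := (|e 0| + 1) * Real.exp (lam * ts) with hM
  have hMpos : 0 < M := by positivity
  refine ⟨M, hMpos, lam, hlam, ?_⟩
  intro t ht
  have hnzt : ‖z t‖ ≠ 0 := hnz t ht
  have hyt1 : ‖y t‖ = 1 := by
    simp only [hy]
    rw [norm_smul, norm_inv, norm_norm]
    field_simp
  have hzt : z t = (ξ t + θ) • y t := by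
    rw [← hθ t ht]
    simp only [hy]
    exact (smul_inv_smul₀ hnzt (z t)).symm
  have hgoal : ‖(ξ t + θhat t) • y t - z t‖ = |e t| := by
    rw [hzt, ← sub_smul]
    have hee : ξ t + θhat t - (ξ t + θ) = e t := by simp only [he]; ring
    rw [hee, norm_smul, hyt1, mul_one, Real.norm_eq_abs]
  rw [hgoal]
  have habs : ∀ s1 s2 : ℝ, 0 ≤ s1 → s1 ≤ s2 → |e s2| ≤ |e s1| := by
    intro s1 s2 h1 h2
    have h := hEanti (mem_Ici.mpr h1) (mem_Ici.mpr (h1.trans h2)) h2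
    simp only [hE] at h
    have h3 : Real.sqrt (e s2 * e s2) ≤ Real.sqrt (e s1 * e s1) := Real.sqrt_le_sqrt h
    rwa [Real.sqrt_mul_self_eq_abs, Real.sqrt_mul_self_eq_abs] at h3
  rcases le_total t ts with hcase | hcase
  · have h1 : |e t| ≤ |e 0| := habs 0 t le_rfl ht
    have h2 : (1:ℝ) ≤ Real.exp (lam * ts) * Real.exp (-lam * t) := by
      rw [← Real.exp_add]
      apply Real.one_le_exp
      nlinarith [hlam]
    calc |e t| ≤ |e 0| := h1
    _ ≤ (|e 0| + 1) * (Real.exp (lam * ts) * Real.exp (-lam * t)) := by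
        have h3 : (0:ℝ) ≤ |e 0| + 1 := by positivity
        have h4 := mul_le_mul_of_nonneg_left h2 h3
        linarith [abs_nonneg (e 0)]
    _ = M * Real.exp (-lam * t) := by rw [hM]; ring
  · have hGt := hG t hcase
    have h1 : |e t| ≤ |e ts| * Real.exp (lam * (ts - t)) := by
      have hsq : e t * e t ≤ (|e ts| * Real.exp (lam * (ts - t))) ^ 2 := by
        have hexpid : (Real.exp (lam * (ts - t))) ^ 2 * Real.exp (2 * lam * t)
            = Real.exp (2 * lam * ts) := by
          rw [sq, ← Real.exp_add, ← Real.exp_add]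
          congr 1
          ring
        have hexppos : (0:ℝ) < Real.exp (2 * lam * t) := Real.exp_pos _
        simp only [hE] at hGt
        rw [mul_pow, sq_abs]
        have h5 : (e t * e t) * Real.exp (2 * lam * t) ≤
            (e ts ^ 2 * (Real.exp (lam * (ts - t))) ^ 2) * Real.exp (2 * lam * t) := by
          calc (e t * e t) * Real.exp (2 * lam * t)
              ≤ (e ts * e ts) * Real.exp (2 * lam * ts) := hGt
          _ = (e ts ^ 2 * (Real.exp (lam * (ts - t))) ^ 2) * Real.exp (2 * lam * t) := by
              rw [← hexpid]; ring
        exact le_of_mul_le_mul_right h5 hexppos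
      calc |e t| = Real.sqrt (e t * e t) := (Real.sqrt_mul_self_eq_abs _).symm
      _ ≤ Real.sqrt ((|e ts| * Real.exp (lam * (ts - t))) ^ 2) := Real.sqrt_le_sqrt hsq
      _ = |e ts| * Real.exp (lam * (ts - t)) := Real.sqrt_sq (by positivity)
    have h2 : |e ts| ≤ |e 0| := habs 0 ts le_rfl hts.le
    have hexpeq : Real.exp (lam * (ts - t)) = Real.exp (lam * ts) * Real.exp (-lam * t) := by
      rw [← Real.exp_add]
      congr 1
      ring
    calc |e t| ≤ |e ts| * Real.exp (lam * (ts - t)) := h1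
    _ ≤ (|e 0| + 1) * (Real.exp (lam * ts) * Real.exp (-lam * t)) := by
        rw [← hexpeq]
        exact mul_le_mul_of_nonneg_right (by linarith) (Real.exp_pos _).le
    _ = M * Real.exp (-lam * t) := by rw [hM]; ring
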